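/- In the single-period linear-quadratic mean field game in dimension 1 with δ = 1, drift b(x,a,m) = a, cost J_m(α) := E[ |X^α − m̄|² + c_L|ξ − E[ξ]|² + c α² ] where X^α = ξ + α + Z and m̄ := ∫ x m(dx), with constants c > 0, c_L > 0, ξ square integrable and Z independent of ξ with E[Z] = 0 and E[Z²] < ∞, the unique mean field equilibrium is (α̂, m̂) with m̂ := law( (c/(1+c))ξ + (1/(1+c))E[ξ] + Z ) and α̂ := (E[ξ] − ξ)/(1+c). -/

import Mathlib

open MeasureTheory ProbabilityTheory Filter
open scoped ENNReal NNReal BigOperators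

noncomputable section

namespace LQ1

variable {Ω : Type*} [MeasurableSpace Ω]

/-- Admissible controls: `σ(ξ)`-measurable square-integrable real random variables. -/
def Adm (P : Measure Ω) (ξ α : Ω → ℝ) : Prop :=
  Measurable[MeasurableSpace.comap ξ inferInstance] α ∧ MemLp α 2 P

/-- Controlled state `X^α = ξ + α + Z`. -/
def X (ξ Z α : Ω → ℝ) (ω : Ω) : ℝ := ξ ω + α ω + Z ω

/-- Mean of a measure on `ℝ`. -/
def mean (m : Measure ℝ) : ℝ := ∫ x, x ∂m

/-- Cost `J_m(α) = E[ |X^α − m̄|² + c_L |ξ − E ξ|² + c α² ]`. -/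
def J (P : Measure Ω) (c cL : ℝ) (ξ Z : Ω → ℝ) (m : Measure ℝ) (α : Ω → ℝ) : ℝ :=
  ∫ ω, ((X ξ Z α ω - mean m) ^ 2 + cL * (ξ ω - ∫ ω', ξ ω' ∂P) ^ 2 + c * α ω ^ 2) ∂P

/-- Mean field equilibrium of the single-period linear-quadratic game. -/
def IsMFE (P : Measure Ω) (c cL : ℝ) (ξ Z : Ω → ℝ) (α : Ω → ℝ) (m : Measure ℝ) : Prop :=
  Adm P ξ α ∧ (∀ β, Adm P ξ β → J P c cL ξ Z m α ≤ J P c cL ξ Z m β) ∧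
    P.map (X ξ Z α) = m

end LQ1


section Helpers

open MeasureTheory ProbabilityTheory

variable {Ω : Type*} [MeasurableSpace Ω] {P : Measure Ω}

lemma LQ1.indepFun_of_comap_left {ξ Z f : Ω → ℝ}
    (hindep : IndepFun ξ Z P)
    (hf : Measurable[MeasurableSpace.comap ξ inferInstance] f) :
    IndepFun f Z P := by
  rw [indepFun_iff_measure_inter_preimage_eq_mul]
  intro s t hs ht
  obtain ⟨s', hs', hpre⟩ := hf hs
  rw [← hpre]
  exact hindep.measure_inter_preimage_eq_mul s' t hs' ht

lemma LQ1.J_decomp [IsProbabilityMeasure P] (c cL : ℝ) (hc : 0 < c) (ξ Z : Ω → ℝ)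
    (hξ : Measurable ξ) (hZ : Measurable Z) (hindep : IndepFun ξ Z P)
    (hξ2 : MemLp ξ 2 P) (hZ2 : MemLp Z 2 P) (hZmean : (∫ ω, Z ω ∂P) = 0)
    (m : Measure ℝ) (α : Ω → ℝ) (hα : LQ1.Adm P ξ α) :
    LQ1.J P c cL ξ Z m α
      = (1 + c) * ∫ ω, (α ω - (LQ1.mean m - ξ ω) / (1 + c)) ^ 2 ∂P
        + ((c / (1 + c)) * ∫ ω, (ξ ω - LQ1.mean m) ^ 2 ∂P
        + (cL * ∫ ω, (ξ ω - ∫ ω', ξ ω' ∂P) ^ 2 ∂P + ∫ ω, Z ω ^ 2 ∂P)) := by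
  have hne : (1 + c) ≠ 0 := by positivity
  set M := LQ1.mean m with hM
  set μ0 := ∫ ω', ξ ω' ∂P with hμ0
  have hαm : Measurable α := hα.1.mono hξ.comap_le le_rfl
  have hα2 : MemLp α 2 P := hα.2
  set f : Ω → ℝ := fun ω => ξ ω + α ω - M with hfdef
  have hf2 : MemLp f 2 P := (hξ2.add hα2).sub (memLp_const M)
  have hfind : IndepFun f Z P :=
    LQ1.indepFun_of_comap_left hindep
      (((comap_measurable ξ).add hα.1).sub measurable_const)
  have hcross : (∫ ω, f ω * Z ω ∂P) = 0 := by
    rw [hfind.integral_fun_mul_eq_mul_integral hf2.aestronglyMeasurable hZ2.aestronglyMeasurable, hZmean, mul_zero]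
  have hhat2 : MemLp (fun ω => (M - ξ ω) / (1 + c)) 2 P := by
    have h : (fun ω => (M - ξ ω) / (1 + c)) = fun ω => (1 / (1 + c)) * ((fun ω' => M - ξ ω') ω) := by
      funext ω; ring
    rw [h]
    exact ((memLp_const M).sub hξ2).const_mul _
  have i1 : Integrable (fun ω => (α ω - (M - ξ ω) / (1 + c)) ^ 2) P :=
    (hα2.sub hhat2).integrable_sq
  have i2 : Integrable (fun ω => (ξ ω - M) ^ 2) P := (hξ2.sub (memLp_const M)).integrable_sq
  have i3 : Integrable (fun ω => (ξ ω - μ0) ^ 2) P := (hξ2.sub (memLp_const μ0)).integrable_sq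
  have i4 : Integrable (fun ω => Z ω ^ 2) P := hZ2.integrable_sq
  have i5 : Integrable (fun ω => f ω * Z ω) P := by
    have h : (fun ω => f ω * Z ω)
        = fun ω => ((f ω + Z ω) ^ 2 - f ω ^ 2 - Z ω ^ 2) / 2 := by
      funext ω; ring
    rw [h]
    exact (((hf2.add hZ2).integrable_sq.sub hf2.integrable_sq).sub i4).div_const 2
  have hpt : ∀ ω, (LQ1.X ξ Z α ω - M) ^ 2 + cL * (ξ ω - μ0) ^ 2 + c * α ω ^ 2
      = (1 + c) * (α ω - (M - ξ ω) / (1 + c)) ^ 2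
        + ((c / (1 + c)) * (ξ ω - M) ^ 2
        + (cL * (ξ ω - μ0) ^ 2 + (Z ω ^ 2 + 2 * (f ω * Z ω)))) := by
    intro ω
    simp only [LQ1.X, hfdef]
    field_simp
    ring
  have hint : LQ1.J P c cL ξ Z m α
      = ∫ ω, ((1 + c) * (α ω - (M - ξ ω) / (1 + c)) ^ 2
        + ((c / (1 + c)) * (ξ ω - M) ^ 2
        + (cL * (ξ ω - μ0) ^ 2 + (Z ω ^ 2 + 2 * (f ω * Z ω))))) ∂P := by
    unfold LQ1.J
    exact integral_congr_ae (Filter.Eventually.of_forall fun ω => hpt ω)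
  have j1 : Integrable (fun ω => (1 + c) * (α ω - (M - ξ ω) / (1 + c)) ^ 2) P := i1.const_mul _
  have j2 : Integrable (fun ω => (c / (1 + c)) * (ξ ω - M) ^ 2) P := i2.const_mul _
  have j3 : Integrable (fun ω => cL * (ξ ω - μ0) ^ 2) P := i3.const_mul _
  have j5 : Integrable (fun ω => 2 * (f ω * Z ω)) P := i5.const_mul _
  have j45 : Integrable (fun ω => Z ω ^ 2 + 2 * (f ω * Z ω)) P := i4.add j5
  have j345 : Integrable (fun ω => cL * (ξ ω - μ0) ^ 2 + (Z ω ^ 2 + 2 * (f ω * Z ω))) P :=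
    j3.add j45
  have j2345 : Integrable (fun ω => (c / (1 + c)) * (ξ ω - M) ^ 2
      + (cL * (ξ ω - μ0) ^ 2 + (Z ω ^ 2 + 2 * (f ω * Z ω)))) P := j2.add j345
  rw [hint, integral_add j1 j2345, integral_add j2 j345, integral_add j3 j45,
    integral_add i4 j5, integral_const_mul, integral_const_mul, integral_const_mul,
    integral_const_mul, hcross, mul_zero, add_zero]

end Helpers

/-- Section 2.3.1. In the single-period linear-quadratic mean field game
(`d = 1`, `δ = 1`, `b(x,a,m) = a`), the pair `(α̂, m̂)` with
`m̂ = law( (c/(1+c)) ξ + (1/(1+c)) E[ξ] + Z )` and `α̂ = (E[ξ] − ξ)/(1+c)` is the unique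
mean field equilibrium. -/
theorem LQ_single_period_unique_MFE
    {Ω : Type*} [MeasurableSpace Ω] (P : Measure Ω) [IsProbabilityMeasure P]
    (c cL : ℝ) (hc : 0 < c) (hcL : 0 < cL)
    (ξ Z : Ω → ℝ) (hξ : Measurable ξ) (hZ : Measurable Z) (hindep : IndepFun ξ Z P)
    (hξ2 : MemLp ξ 2 P) (hZ2 : MemLp Z 2 P) (hZmean : (∫ ω, Z ω ∂P) = 0) :
    LQ1.IsMFE P c cL ξ Z
      (fun ω => ((∫ ω', ξ ω' ∂P) - ξ ω) / (1 + c))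
      (P.map (fun ω => (c / (1 + c)) * ξ ω + (1 / (1 + c)) * (∫ ω', ξ ω' ∂P) + Z ω)) ∧
    ∀ (α : Ω → ℝ) (m : Measure ℝ), LQ1.IsMFE P c cL ξ Z α m →
      α =ᵐ[P] (fun ω => ((∫ ω', ξ ω' ∂P) - ξ ω) / (1 + c)) ∧
      m = P.map (fun ω => (c / (1 + c)) * ξ ω + (1 / (1 + c)) * (∫ ω', ξ ω' ∂P) + Z ω) := by
  classical
  have h1c : (0:ℝ) < 1 + c := by positivity
  have hne : (1:ℝ) + c ≠ 0 := ne_of_gt h1c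
  set μ0 := ∫ ω', ξ ω' ∂P with hμ0
  set αhat : Ω → ℝ := fun ω => (μ0 - ξ ω) / (1 + c) with hαhat
  set fhat : Ω → ℝ := fun ω => (c / (1 + c)) * ξ ω + (1 / (1 + c)) * μ0 + Z ω with hfhat
  have hXeq : LQ1.X ξ Z αhat = fhat := by
    funext ω
    simp only [LQ1.X, hαhat, hfhat]
    field_simp
    ring
  have intξ : Integrable ξ P := hξ2.integrable one_le_two
  have intZ : Integrable Z P := hZ2.integrable one_le_two
  have hfhatm : Measurable fhat := ((hξ.const_mul _).add measurable_const).add hZ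
  have admM : ∀ M : ℝ, LQ1.Adm P ξ (fun ω => (M - ξ ω) / (1 + c)) := by
    intro M
    refine ⟨(measurable_const.sub (comap_measurable ξ)).div_const _, ?_⟩
    have h : (fun ω => (M - ξ ω) / (1 + c)) = fun ω => (1 / (1 + c)) * ((fun ω' => M - ξ ω') ω) := by
      funext ω; ring
    rw [h]
    exact ((memLp_const M).sub hξ2).const_mul _
  have hmeanhat : LQ1.mean (P.map fhat) = μ0 := by
    have A := integral_map (μ := P) hfhatm.aemeasurable
      (aestronglyMeasurable_id (α := ℝ) (μ := P.map fhat))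
    simp only [id_eq] at A
    rw [LQ1.mean, A]
    simp only [hfhat]
    have k1 : Integrable (fun ω => c / (1 + c) * ξ ω) P := intξ.const_mul _
    have k2 : Integrable (fun _ : Ω => 1 / (1 + c) * μ0) P := integrable_const _
    have k12 : Integrable (fun ω => c / (1 + c) * ξ ω + 1 / (1 + c) * μ0) P := k1.add k2
    rw [integral_add k12 intZ, integral_add k1 k2, integral_const_mul, integral_const, hZmean]
    simp only [measure_univ, probReal_univ, ENNReal.toReal_one, smul_eq_mul, one_mul, add_zero, ← hμ0]
    field_simp
    ring
  -- optimality of αhat for the measure P.map fhat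
  have hopt : ∀ β, LQ1.Adm P ξ β →
      LQ1.J P c cL ξ Z (P.map fhat) αhat ≤ LQ1.J P c cL ξ Z (P.map fhat) β := by
    intro β hβ
    rw [LQ1.J_decomp c cL hc ξ Z hξ hZ hindep hξ2 hZ2 hZmean _ _ (admM μ0),
      LQ1.J_decomp c cL hc ξ Z hξ hZ hindep hξ2 hZ2 hZmean _ _ hβ]
    have e0 : (∫ ω, (αhat ω - (LQ1.mean (P.map fhat) - ξ ω) / (1 + c)) ^ 2 ∂P) = 0 := by
      rw [hmeanhat]
      simp [hαhat]
    have e1 : (0:ℝ) ≤ ∫ ω, (β ω - (LQ1.mean (P.map fhat) - ξ ω) / (1 + c)) ^ 2 ∂P :=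
      integral_nonneg fun ω => sq_nonneg _
    have e2 : (0:ℝ) ≤ (1 + c) * ∫ ω, (β ω - (LQ1.mean (P.map fhat) - ξ ω) / (1 + c)) ^ 2 ∂P :=
      mul_nonneg h1c.le e1
    rw [e0]
    linarith
  refine ⟨⟨admM μ0, hopt, by rw [hXeq]⟩, ?_⟩
  rintro α m ⟨hadm, hopt', hmap⟩
  have hαm : Measurable α := hadm.1.mono hξ.comap_le le_rfl
  have intα : Integrable α P := hadm.2.integrable one_le_two
  have hadmM := admM (LQ1.mean m)
  have hJα := LQ1.J_decomp c cL hc ξ Z hξ hZ hindep hξ2 hZ2 hZmean m α hadm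
  have hJhat := LQ1.J_decomp c cL hc ξ Z hξ hZ hindep hξ2 hZ2 hZmean m _ hadmM
  have h := hopt' _ hadmM
  rw [hJα, hJhat] at h
  have hInn : (0:ℝ) ≤ ∫ ω, (α ω - (LQ1.mean m - ξ ω) / (1 + c)) ^ 2 ∂P :=
    integral_nonneg fun ω => sq_nonneg _
  have e0 : (∫ ω, ((fun ω' => (LQ1.mean m - ξ ω') / (1 + c)) ω
      - (LQ1.mean m - ξ ω) / (1 + c)) ^ 2 ∂P) = 0 := by simp
  rw [e0, mul_zero] at h
  have hI0 : (∫ ω, (α ω - (LQ1.mean m - ξ ω) / (1 + c)) ^ 2 ∂P) = 0 := by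
    nlinarith
  have hint : Integrable (fun ω => (α ω - (LQ1.mean m - ξ ω) / (1 + c)) ^ 2) P :=
    (hadm.2.sub hadmM.2).integrable_sq
  have hae0 : (fun ω => (α ω - (LQ1.mean m - ξ ω) / (1 + c)) ^ 2) =ᵐ[P] 0 :=
    (integral_eq_zero_iff_of_nonneg (fun ω => sq_nonneg _) hint).mp hI0
  have haeq : α =ᵐ[P] fun ω => (LQ1.mean m - ξ ω) / (1 + c) := by
    filter_upwards [hae0] with ω hω
    have h2 : α ω - (LQ1.mean m - ξ ω) / (1 + c) = 0 := by
      have := hω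
      simp only [Pi.zero_apply] at this
      exact (pow_eq_zero_iff two_ne_zero).mp this
    linarith
  -- compute the mean of m
  have hXm : Measurable (LQ1.X ξ Z α) := (hξ.add hαm).add hZ
  have hmeanm : LQ1.mean m = μ0 + ∫ ω, α ω ∂P := by
    have A := integral_map (μ := P) hXm.aemeasurable
      (aestronglyMeasurable_id (α := ℝ) (μ := P.map (LQ1.X ξ Z α)))
    simp only [id_eq] at A
    rw [← hmap, LQ1.mean, A]
    show (∫ ω, (ξ ω + α ω + Z ω) ∂P) = μ0 + ∫ ω, α ω ∂P
    have k3 : Integrable (fun ω => ξ ω + α ω) P := intξ.add intα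
    rw [integral_add k3 intZ, integral_add intξ intα, hZmean, add_zero, ← hμ0]
  have hintα : (∫ ω, α ω ∂P) = (LQ1.mean m - μ0) / (1 + c) := by
    rw [integral_congr_ae haeq]
    have h3 : (fun ω => (LQ1.mean m - ξ ω) / (1 + c))
        = fun ω => (1 / (1 + c)) * ((fun ω' => LQ1.mean m - ξ ω') ω) := by
      funext ω; ring
    rw [h3, integral_const_mul, integral_sub (integrable_const _) intξ, integral_const]
    simp only [measure_univ, probReal_univ, ENNReal.toReal_one, smul_eq_mul, one_mul, ← hμ0]
    ring
  have hMμ : LQ1.mean m = μ0 := by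
    have h5 : LQ1.mean m - μ0 = (LQ1.mean m - μ0) / (1 + c) := by
      linarith [hmeanm, hintα]
    rw [eq_div_iff hne] at h5
    have h6 : (LQ1.mean m - μ0) * c = 0 := by linear_combination h5
    rcases mul_eq_zero.mp h6 with h7 | h7
    · linarith
    · exact absurd h7 hc.ne'
  rw [hMμ] at haeq
  refine ⟨haeq, ?_⟩
  have hae : LQ1.X ξ Z α =ᵐ[P] fhat := by
    filter_upwards [haeq] with ω hω
    show ξ ω + α ω + Z ω = fhat ω
    rw [hω]
    simp only [hfhat]
    field_simp
    ring
  rw [← hmap, Measure.map_congr hae]
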